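/- Let D₀ ⊆ ℂ be a nonempty bounded convex open set and let ζ₀ ∈ D₀ be a point at maximal distance to the boundary, i.e. dist(ζ₀, ∂D₀) = sup_{ζ ∈ D₀} dist(ζ, ∂D₀). Let M = { p ∈ ∂D₀ : |p − ζ₀| = dist(ζ₀, ∂D₀) }. Then M is nonempty, and for every θ ∈ ℝ the set M is not contained in the open half-plane H_θ = { ζ ∈ ℂ : Re((ζ − ζ₀)·e^{−iθ}) < 0 }. -/

import Mathlib

open Metric Set

/-- Let `D₀ ⊆ ℂ` be a nonempty bounded convex open set and `ζ₀ ∈ D₀` a point at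
maximal distance to the boundary. Then the set
`M = { p ∈ ∂D₀ : |p − ζ₀| = dist(ζ₀, ∂D₀) }` is nonempty and, for every `θ ∈ ℝ`, `M`
is not contained in the half-plane `{ ζ : Re((ζ − ζ₀) e^{−iθ}) < 0 }`. -/
theorem contact_set_nonempty_not_in_halfplane
    (D₀ : Set ℂ) (hne : D₀.Nonempty) (hconv : Convex ℝ D₀) (hopen : IsOpen D₀)
    (hbdd : Bornology.IsBounded D₀) (ζ₀ : ℂ) (hζ₀ : ζ₀ ∈ D₀)
    (hmax : ∀ ζ ∈ D₀, infDist ζ (frontier D₀) ≤ infDist ζ₀ (frontier D₀)) :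
    { p ∈ frontier D₀ | dist p ζ₀ = infDist ζ₀ (frontier D₀) }.Nonempty ∧
      ∀ θ : ℝ,
        ¬ ({ p ∈ frontier D₀ | dist p ζ₀ = infDist ζ₀ (frontier D₀) } ⊆
          { ζ : ℂ | ((ζ - ζ₀) * Complex.exp (-(θ : ℂ) * Complex.I)).re < 0 }) := by
  set K := frontier D₀ with hK
  set r := infDist ζ₀ K with hr
  have hKclosed : IsClosed K := isClosed_frontier
  have hKbdd : Bornology.IsBounded K := hbdd.closure.subset frontier_subset_closure
  have hKcompact : IsCompact K := Metric.isCompact_of_isClosed_isBounded hKclosed hKbdd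
  have hDne_univ : D₀ ≠ univ := by
    intro h
    obtain ⟨R, hR⟩ := hbdd.subset_closedBall 0
    have : (‖((|R| : ℝ) : ℂ) + 1‖ : ℝ) ≤ R := by
      simpa [Complex.dist_eq, Complex.norm_real, Real.norm_eq_abs, abs_of_nonneg (by positivity : (0:ℝ) ≤ |R| + 1)]
        using hR (h ▸ mem_univ ((|R| + 1 : ℝ) : ℂ))
    rw [show ((|R| : ℝ) : ℂ) + 1 = ((|R| + 1 : ℝ) : ℂ) by push_cast; ring,
      Complex.norm_real, Real.norm_eq_abs, abs_of_nonneg (by positivity : (0:ℝ) ≤ |R| + 1)] at this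
    linarith [abs_nonneg R, le_abs_self R]
  have hKne : K.Nonempty := nonempty_frontier_iff.mpr ⟨hne, hDne_univ⟩
  have hζ₀K : ζ₀ ∉ K := fun h => h.2 (subset_interior_iff_isOpen.mpr hopen hζ₀)
  have hrpos : 0 < r := (hKclosed.notMem_iff_infDist_pos hKne).1 hζ₀K
  -- the ball of radius r around ζ₀ is inside D₀
  have hball : ball ζ₀ r ⊆ D₀ := by
    obtain ⟨y, hyK, hy⟩ := exists_mem_frontier_infDist_compl_eq_dist hζ₀ hDne_univ
    have h1 : r ≤ infDist ζ₀ D₀ᶜ := by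
      rw [hy]; exact infDist_le_dist_of_mem hyK
    exact (ball_subset_ball h1).trans ball_infDist_compl_subset
  -- distance from any point of D₀ to K is at most r
  have hinfle : ∀ p ∈ K, r ≤ dist p ζ₀ := fun p hp => by
    rw [dist_comm]; exact infDist_le_dist_of_mem hp
  obtain ⟨p₀, hp₀K, hp₀⟩ := hKcompact.exists_infDist_eq_dist hKne ζ₀
  have hMne : { p ∈ K | dist p ζ₀ = r }.Nonempty :=
    ⟨p₀, hp₀K, by rw [dist_comm, ← hp₀]⟩
  refine ⟨hMne, fun θ hsub => ?_⟩
  set u := Complex.exp ((θ : ℂ) * Complex.I) with hu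
  have hcu : (starRingEnd ℂ) u = Complex.exp (-(θ : ℂ) * Complex.I) := by
    rw [hu, ← Complex.exp_conj]
    congr 1
    rw [map_mul, Complex.conj_ofReal, Complex.conj_I]
    ring
  have habsu : ‖u‖ = 1 := Complex.norm_exp_ofReal_mul_I θ
  -- find δ > 0 such that every boundary point outside H is at distance ≥ r + δ
  set H := { ζ : ℂ | ((ζ - ζ₀) * Complex.exp (-(θ : ℂ) * Complex.I)).re < 0 } with hHdef
  obtain ⟨δ, hδpos, hδ⟩ : ∃ δ > 0, ∀ p ∈ K, p ∉ H → r + δ ≤ dist p ζ₀ := by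
    by_cases hempty : (K ∩ Hᶜ).Nonempty
    · have hcpt : IsCompact (K ∩ Hᶜ) := hKcompact.inter_right (by
        have : IsOpen H := by
          have : Continuous fun ζ : ℂ => ((ζ - ζ₀) * Complex.exp (-(θ : ℂ) * Complex.I)).re := by
            fun_prop
          exact isOpen_lt this continuous_const
        exact this.isClosed_compl)
      obtain ⟨q, hqmem, hq⟩ := hcpt.exists_infDist_eq_dist hempty ζ₀
      have hq_ne : dist ζ₀ q ≠ r := by
        intro h
        exact hqmem.2 (hsub ⟨hqmem.1, by rw [dist_comm, h]⟩)
      have hqr : r < dist ζ₀ q :=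
        lt_of_le_of_ne (by rw [dist_comm]; exact hinfle q hqmem.1) (Ne.symm hq_ne)
      refine ⟨dist ζ₀ q - r, by linarith, fun p hp hpH => ?_⟩
      have : infDist ζ₀ (K ∩ Hᶜ) ≤ dist ζ₀ p := infDist_le_dist_of_mem ⟨hp, hpH⟩
      rw [hq] at this
      rw [dist_comm p ζ₀]; linarith
    · refine ⟨1, one_pos, fun p hp hpH => absurd ⟨p, hp, hpH⟩ hempty⟩
  set ε := min δ r / 2 with hε
  have hεpos : 0 < ε := by positivity
  have hεδ : ε < δ := by
    have := min_le_left δ r; simp only [hε]; linarith [min_le_left δ r]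
  have hεr : ε < r := by
    simp only [hε]; linarith [min_le_right δ r]
  set ζ₁ := ζ₀ + (ε : ℂ) * u with hζ₁
  have hζ₁D : ζ₁ ∈ D₀ := by
    apply hball
    rw [mem_ball, hζ₁, dist_eq_norm]
    simp only [add_sub_cancel_left]
    rw [norm_mul, habsu, mul_one]
    rwa [Complex.norm_real, Real.norm_eq_abs, abs_of_pos hεpos]
  -- key: every boundary point is at distance > r from ζ₁
  have hfar : ∀ p ∈ K, r < dist ζ₁ p := by
    intro p hp
    by_cases hpH : p ∈ H
    · -- use the normSq computation
      have hRe : ((p - ζ₀) * Complex.exp (-(θ : ℂ) * Complex.I)).re < 0 := hpH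
      have h1 : dist ζ₁ p ^ 2 = Complex.normSq (p - ζ₁) := by
        rw [dist_comm, dist_eq_norm, ← Complex.sq_norm]
      have h2 : Complex.normSq (p - ζ₁) =
          Complex.normSq (p - ζ₀) + ε ^ 2 - 2 * ε * ((p - ζ₀) * (starRingEnd ℂ) u).re := by
        have : p - ζ₁ = (p - ζ₀) - (ε : ℂ) * u := by rw [hζ₁]; ring
        rw [this, Complex.normSq_sub]
        have hnsq : Complex.normSq ((ε : ℂ) * u) = ε ^ 2 := by
          rw [← Complex.sq_norm, norm_mul, habsu, mul_one, Complex.norm_real, Real.norm_eq_abs,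
            abs_of_pos hεpos]
        rw [hnsq]
        have : ((p - ζ₀) * (starRingEnd ℂ) ((ε : ℂ) * u)).re
            = ε * ((p - ζ₀) * (starRingEnd ℂ) u).re := by
          rw [map_mul, Complex.conj_ofReal]
          have : (p - ζ₀) * ((ε : ℂ) * (starRingEnd ℂ) u)
              = (ε : ℂ) * ((p - ζ₀) * (starRingEnd ℂ) u) := by ring
          rw [this, Complex.re_ofReal_mul]
        rw [this]; ring
      have h3 : r ^ 2 ≤ Complex.normSq (p - ζ₀) := by
        rw [← Complex.sq_norm]
        have : r ≤ ‖p - ζ₀‖ := by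
          have := hinfle p hp
          rwa [dist_eq_norm] at this
        nlinarith [norm_nonneg (p - ζ₀)]
      have h4 : r ^ 2 < dist ζ₁ p ^ 2 := by
        rw [h1, h2, hcu]
        nlinarith
      nlinarith [dist_nonneg (x := ζ₁) (y := p), hrpos]
    · have h1 : r + δ ≤ dist p ζ₀ := hδ p hp hpH
      have h2 : dist p ζ₀ ≤ dist p ζ₁ + dist ζ₁ ζ₀ := dist_triangle p ζ₁ ζ₀
      have h3 : dist ζ₁ ζ₀ = ε := by
        rw [hζ₁, dist_eq_norm]
        simp only [add_sub_cancel_left]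
        rw [norm_mul, habsu, mul_one,
          Complex.norm_real, Real.norm_eq_abs, abs_of_pos hεpos]
      rw [dist_comm]
      linarith
  -- contradiction with maximality
  obtain ⟨q, hqK, hq⟩ := hKcompact.exists_infDist_eq_dist hKne ζ₁
  have : r < infDist ζ₁ K := by rw [hq]; exact hfar q hqK
  linarith [hmax ζ₁ hζ₁D]
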